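/- arXiv:1403.7026 — 9 statements merged into one kernel-verified Lean document; each statement's English description precedes it below -/
import Mathlib

section
/- Let q be an odd prime power, ξ a nonsquare in F_q, a ∈ F_{q^3}* with N_{q^3/q}(a) ∉ {1, -1}, and r ∈ {1,2}. Then for all (x,y) ∈ F_{q^3}² with (x,y) ≠ (0,0), one has ξ·x·A_{a,r}(x) ≠ y·A_{a,r}(y), where A_{a,r}(z) = z^{q^r} - a·z^{q^{3-r}}. Equivalently, the multiplication (u,v) ⋆ (x,y) = (ux + v·A_{a,r}(y), uy + ξ·v·A_{a,r}(x)) on F_{q^3} × F_{q^3} has no zero divisors. -/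
/-- Auxiliary lemma: core of the Dempwolff no-zero-divisor argument.
Given the `q`-power Frobenius `f`, a cyclic relation among
`α = ξ x x^q - y y^q`, `β = ξ x^q x^{q²} - y^q y^{q²}`,
`γ = ξ x^{q²} x - y^{q²} y` with multiplier `a` of norm `≠ 1`,
we derive a contradiction with `ξ` being a nonsquare in `F_q`. -/
private lemma dempAux {K : Type*} [Field K] (q : ℕ) (hq0 : q ≠ 0) (f : K →+* K)
    (hf : ∀ z : K, f z = z ^ q) (hcube : ∀ z : K, ((z ^ q) ^ q) ^ q = z)
    (ξ a x y : K) (hξq : ξ ^ q = ξ)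
    (hξns : ¬ ∃ c : K, c ^ q = c ∧ c ^ 2 = ξ)
    (hNa : a * a ^ q * (a ^ q) ^ q ≠ 1)
    (hxy : ¬ (x = 0 ∧ y = 0))
    (hcyc : ξ * (x * x ^ q) - y * y ^ q
              = a * (ξ * ((x ^ q) ^ q * x) - (y ^ q) ^ q * y) ∨
            ξ * ((x ^ q) ^ q * x) - (y ^ q) ^ q * y
              = a * (ξ * (x * x ^ q) - y * y ^ q)) : False := by
  have hP : (1 : K) - a * a ^ q * (a ^ q) ^ q ≠ 0 := sub_ne_zero_of_ne (Ne.symm hNa)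
  -- First: all three quantities vanish.
  have h0 : ξ * (x * x ^ q) - y * y ^ q = 0 ∧
      ξ * ((x ^ q) ^ q * x) - (y ^ q) ^ q * y = 0 := by
    rcases hcyc with hα | hγ
    · have hβ := congrArg f hα
      simp only [map_sub, map_mul, map_pow] at hβ
      simp only [hf, hξq, hcube] at hβ
      have hγ := congrArg f hβ
      simp only [map_sub, map_mul, map_pow] at hγ
      simp only [hf, hξq, hcube] at hγ
      have key : (ξ * ((x ^ q) ^ q * x) - (y ^ q) ^ q * y)
          * (1 - a * a ^ q * (a ^ q) ^ q) = 0 := by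
        linear_combination hγ + (a ^ q) ^ q * hβ + ((a ^ q) ^ q * a ^ q) * hα
      have hγ0 : ξ * ((x ^ q) ^ q * x) - (y ^ q) ^ q * y = 0 :=
        (mul_eq_zero.mp key).resolve_right hP
      exact ⟨by rw [hα, hγ0, mul_zero], hγ0⟩
    · have hα := congrArg f hγ
      simp only [map_sub, map_mul, map_pow] at hα
      simp only [hf, hξq, hcube] at hα
      have hβ := congrArg f hα
      simp only [map_sub, map_mul, map_pow] at hβ
      simp only [hf, hξq, hcube] at hβ
      have key : (ξ * ((x ^ q) ^ q * x) - (y ^ q) ^ q * y)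
          * (1 - a * a ^ q * (a ^ q) ^ q) = 0 := by
        linear_combination hγ + a * hα + (a * a ^ q) * hβ
      have hγ0 : ξ * ((x ^ q) ^ q * x) - (y ^ q) ^ q * y = 0 :=
        (mul_eq_zero.mp key).resolve_right hP
      have hβ0 : ξ * (x ^ q * (x ^ q) ^ q) - y ^ q * (y ^ q) ^ q = 0 := by
        rw [hβ, hγ0, mul_zero]
      exact ⟨by rw [hα, hβ0, mul_zero], hγ0⟩
  obtain ⟨hα0, hγ0⟩ := h0
  have hβ0 : ξ * (x ^ q * (x ^ q) ^ q) - y ^ q * (y ^ q) ^ q = 0 := by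
    have h := congrArg f hα0
    simp only [map_sub, map_mul, map_pow, map_zero] at h
    simpa only [hf, hξq, hcube] using h
  -- x ≠ 0
  have hx : x ≠ 0 := by
    intro hx0
    apply hxy
    refine ⟨hx0, ?_⟩
    subst hx0
    simp only [zero_pow hq0, mul_zero, zero_mul, zero_sub, neg_eq_zero] at hα0
    rcases mul_eq_zero.mp hα0 with h | h
    · exact h
    · exact (pow_eq_zero_iff hq0).mp h
  have hξ0 : ξ ≠ 0 := by
    intro h
    exact hξns ⟨0, by rw [zero_pow hq0], by simp [h]⟩
  have hxq : x ^ q ≠ 0 := pow_ne_zero q hx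
  have hNx : x * x ^ q * (x ^ q) ^ q ≠ 0 :=
    mul_ne_zero (mul_ne_zero hx hxq) (pow_ne_zero q hxq)
  have hprod : ξ ^ 3 * (x * x ^ q * (x ^ q) ^ q) ^ 2
      = (y * y ^ q * (y ^ q) ^ q) ^ 2 := by
    linear_combination (ξ * (x ^ q * (x ^ q) ^ q) * (ξ * ((x ^ q) ^ q * x))) * hα0
      + (y * y ^ q * (ξ * ((x ^ q) ^ q * x))) * hβ0
      + (y * y ^ q * (y ^ q * (y ^ q) ^ q)) * hγ0
  have hdenom : ξ * (x * x ^ q * (x ^ q) ^ q) ≠ 0 := mul_ne_zero hξ0 hNx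
  have hNyq : (y * y ^ q * (y ^ q) ^ q) ^ q = y * y ^ q * (y ^ q) ^ q := by
    rw [mul_pow, mul_pow, hcube]; ring
  have hNxq : (x * x ^ q * (x ^ q) ^ q) ^ q = x * x ^ q * (x ^ q) ^ q := by
    rw [mul_pow, mul_pow, hcube]; ring
  refine hξns ⟨(y * y ^ q * (y ^ q) ^ q) / (ξ * (x * x ^ q * (x ^ q) ^ q)), ?_, ?_⟩
  · rw [div_pow, hNyq, mul_pow, hξq, hNxq]
  · rw [div_pow, div_eq_iff (pow_ne_zero 2 hdenom)]
    linear_combination -hprod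

/-- the Dempwolff presemifield `D_A` has no zero divisors:
for `(x,y) ≠ (0,0)`, `ξ x A_{a,r}(x) ≠ y A_{a,r}(y)`. -/
theorem stmt2 (q : ℕ) (hq : IsPrimePow q) (hodd : Odd q)
    (K : Type*) [Field K] [Fintype K] (hcard : Fintype.card K = q ^ 3)
    (ξ : K) (hξq : ξ ^ q = ξ) (hξns : ¬ ∃ c : K, c ^ q = c ∧ c ^ 2 = ξ)
    (a : K) (ha : a ≠ 0)
    (hN1 : a ^ (1 + q + q ^ 2) ≠ 1) (hN2 : a ^ (1 + q + q ^ 2) ≠ -1)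
    (r : ℕ) (hr : r = 1 ∨ r = 2) :
    ∀ x y : K, ¬ (x = 0 ∧ y = 0) →
      ξ * x * (x ^ q ^ r - a * x ^ q ^ (3 - r)) ≠
        y * (y ^ q ^ r - a * y ^ q ^ (3 - r)) := by
  obtain ⟨p, n, hpp, hn, hpn⟩ := hq
  have hp : Nat.Prime p := Nat.prime_iff.mpr hpp
  have hq0 : q ≠ 0 := by
    rw [← hpn]; exact pow_ne_zero n hp.pos.ne'
  -- characteristic of K is p
  have hcardp : Fintype.card K = p ^ (3 * n) := by
    rw [hcard, ← hpn, ← pow_mul, Nat.mul_comm n 3]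
  haveI : CharP K (ringChar K) := ringChar.charP K
  obtain ⟨m, hm1, hm2⟩ := FiniteField.card K (ringChar K)
  have hpe : ringChar K = p := by
    have hdvd : p ∣ ringChar K ^ (m : ℕ) := by
      rw [← hm2, hcardp]
      exact dvd_pow_self p (by omega)
    have h := hp.dvd_of_dvd_pow hdvd
    exact ((Nat.prime_dvd_prime_iff_eq hp hm1).mp h).symm
  haveI hcharp : CharP K p := hpe ▸ ringChar.charP K
  haveI : Fact (Nat.Prime p) := ⟨hp⟩
  have hf : ∀ z : K, iterateFrobenius K p n z = z ^ q := by
    intro z; rw [iterateFrobenius_def, hpn]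
  have hcube : ∀ z : K, ((z ^ q) ^ q) ^ q = z := by
    intro z
    rw [← pow_mul, ← pow_mul, show q * (q * q) = q ^ 3 by ring, ← hcard]
    exact FiniteField.pow_card z
  have hsq : ∀ z : K, z ^ q ^ 2 = (z ^ q) ^ q := by
    intro z; rw [pow_two, pow_mul]
  have hNa : a * a ^ q * (a ^ q) ^ q ≠ 1 := by
    intro h
    apply hN1
    rw [pow_add, pow_add, pow_one, hsq, h]
  intro x y hxy heq
  rcases hr with rfl | rfl
  · simp only [pow_one, show (3 : ℕ) - 1 = 2 from rfl, hsq] at heq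
    exact dempAux q hq0 (iterateFrobenius K p n) hf hcube ξ a x y hξq hξns hNa hxy
      (Or.inl (by linear_combination heq))
  · simp only [pow_one, show (3 : ℕ) - 2 = 1 from rfl, hsq] at heq
    exact dempAux q hq0 (iterateFrobenius K p n) hf hcube ξ a x y hξq hξns hNa hxy
      (Or.inr (by linear_combination heq))
end

section
/- Let q be an odd prime power, ξ a nonsquare in F_q, and a ∈ F_{q^3}* with N_{q^3/q}(a) ∉ {-1, 1}. In PG(3, q^3) the two lines t_1 : {X_2 = -a^{q^r+1}·X_1, X_3 = -ξ·a^{q^r+1}·X_0} and t_2 : {X_1 = a^{q^{3-r}}·X_2, X_0 = (a^{q^{3-r}}/ξ)·X_3} are disjoint and both are external to (i.e., contain no point of) the hyperbolic quadric Q : X_0·X_3 - X_1·X_2 = 0. -/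
/-- the lines `t_1` and `t_2` are disjoint and both external to
the hyperbolic quadric `X_0 X_3 - X_1 X_2 = 0` of `PG(3,q^3)`. -/
theorem stmt3 (q : ℕ) (hq : IsPrimePow q) (hodd : Odd q)
    (K : Type*) [Field K] [Fintype K] (hcard : Fintype.card K = q ^ 3)
    (ξ : K) (hξq : ξ ^ q = ξ) (hξns : ¬ ∃ c : K, c ^ q = c ∧ c ^ 2 = ξ)
    (a : K) (ha : a ≠ 0)
    (hN1 : a ^ (1 + q + q ^ 2) ≠ 1) (hN2 : a ^ (1 + q + q ^ 2) ≠ -1)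
    (r : ℕ) (hr : r = 1 ∨ r = 2) :
    -- t1 and t2 are disjoint (the underlying planes meet only in 0)
    (∀ x0 x1 x2 x3 : K,
      (x2 = -a ^ (q ^ r + 1) * x1 ∧ x3 = -ξ * a ^ (q ^ r + 1) * x0) →
      (x1 = a ^ q ^ (3 - r) * x2 ∧ x0 = a ^ q ^ (3 - r) / ξ * x3) →
      x0 = 0 ∧ x1 = 0 ∧ x2 = 0 ∧ x3 = 0) ∧
    -- t1 is external to the quadric
    (∀ x0 x1 x2 x3 : K,
      (x2 = -a ^ (q ^ r + 1) * x1 ∧ x3 = -ξ * a ^ (q ^ r + 1) * x0) →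
      ¬ (x0 = 0 ∧ x1 = 0 ∧ x2 = 0 ∧ x3 = 0) →
      x0 * x3 - x1 * x2 ≠ 0) ∧
    -- t2 is external to the quadric
    (∀ x0 x1 x2 x3 : K,
      (x1 = a ^ q ^ (3 - r) * x2 ∧ x0 = a ^ q ^ (3 - r) / ξ * x3) →
      ¬ (x0 = 0 ∧ x1 = 0 ∧ x2 = 0 ∧ x3 = 0) →
      x0 * x3 - x1 * x2 ≠ 0) := by
  have hqpos : 0 < q := hq.pos
  have hq3 : ∀ x : K, x ^ q ^ 3 = x := fun x => by
    rw [← hcard]; exact FiniteField.pow_card x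
  -- ξ ≠ 0
  have hξ0 : ξ ≠ 0 := by
    intro h
    exact hξns ⟨0, by simp [hqpos.ne'], by simp [h]⟩
  -- ξ is a nonsquare in all of K
  have hsq : ∀ c : K, c ^ 2 ≠ ξ := by
    intro c hc
    have hc2 : (c ^ q) ^ 2 = c ^ 2 := by
      rw [← pow_mul, mul_comm, pow_mul, hc, hξq, ← hc]
    have hprod : (c ^ q - c) * (c ^ q + c) = 0 := by linear_combination hc2
    rcases mul_eq_zero.mp hprod with h | h
    · exact hξns ⟨c, sub_eq_zero.mp h, hc⟩
    · have hcq : c ^ q = -c := eq_neg_of_add_eq_zero_left h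
      have hq2 : c ^ q ^ 2 = c := by
        have : c ^ q ^ 2 = (c ^ q) ^ q := by rw [← pow_mul, pow_two]
        rw [this, hcq, hodd.neg_pow, hcq, neg_neg]
      have hq3' : c ^ q ^ 3 = -c := by
        have : c ^ q ^ 3 = (c ^ q ^ 2) ^ q := by rw [← pow_mul, ← pow_succ]
        rw [this, hq2, hcq]
      have hcc : c = -c := (hq3 c).symm.trans hq3'
      have hc0 : c ≠ 0 := by
        intro h0
        exact hξns ⟨0, by simp [hqpos.ne'], by simp [← hc, h0]⟩
      have h2 : (2 : K) = 0 := by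
        have : (2 : K) * c = 0 := by linear_combination hcc
        rcases mul_eq_zero.mp this with h | h
        · exact h
        · exact absurd h hc0
      have hchar : ringChar K = 2 := by
        have hd : ringChar K ∣ 2 := by
          rw [← Nat.cast_ofNat (n := 2)] at h2
          exact ringChar.dvd h2
        have hne1 : ringChar K ≠ 1 := CharP.ringChar_ne_one
        have hle := Nat.le_of_dvd (by norm_num) hd
        have hpos := Nat.pos_of_dvd_of_pos hd (by norm_num)
        omega
      have heven := FiniteField.even_card_iff_char_two.mp hchar
      rw [hcard] at heven
      have : Odd (q ^ 3) := hodd.pow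
      rw [Nat.odd_iff] at this
      omega
  -- nonvanishing coefficients
  have hA : a ^ (q ^ r + 1) ≠ 0 := pow_ne_zero _ ha
  have hB : a ^ q ^ (3 - r) ≠ 0 := pow_ne_zero _ ha
  -- product of the coefficients is the norm
  have hAB : a ^ (q ^ r + 1) * a ^ q ^ (3 - r) = a ^ (1 + q + q ^ 2) := by
    rw [← pow_add]
    congr 1
    rcases hr with h | h <;> subst h <;> ring
  have hkey : (1 : K) + a ^ (q ^ r + 1) * a ^ q ^ (3 - r) ≠ 0 := by
    rw [hAB]
    intro h
    exact hN2 (by linear_combination h)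
  refine ⟨?_, ?_, ?_⟩
  · rintro x0 x1 x2 x3 ⟨h2, h3⟩ ⟨h1, h0⟩
    have e1 : x1 * (1 + a ^ (q ^ r + 1) * a ^ q ^ (3 - r)) = 0 := by
      rw [h2] at h1; linear_combination h1
    have e0' : x0 * ξ * (1 + a ^ (q ^ r + 1) * a ^ q ^ (3 - r)) = 0 := by
      rw [h3] at h0
      field_simp at h0
      linear_combination ξ * h0
    have hx1 : x1 = 0 := by
      rcases mul_eq_zero.mp e1 with h | h
      · exact h
      · exact absurd h hkey
    have hx0 : x0 = 0 := by
      rcases mul_eq_zero.mp e0' with h | h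
      · rcases mul_eq_zero.mp h with h' | h'
        · exact h'
        · exact absurd h' hξ0
      · exact absurd h hkey
    exact ⟨hx0, hx1, by rw [h2, hx1, mul_zero], by rw [h3, hx0, mul_zero]⟩
  · rintro x0 x1 x2 x3 ⟨h2, h3⟩ hne hquad
    rw [h2, h3] at hquad
    have hfac : a ^ (q ^ r + 1) * (x1 ^ 2 - ξ * x0 ^ 2) = 0 := by
      linear_combination hquad
    have hx : x1 ^ 2 = ξ * x0 ^ 2 := by
      rcases mul_eq_zero.mp hfac with h | h
      · exact absurd h hA
      · linear_combination h
    by_cases hx0 : x0 = 0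
    · have hx1 : x1 = 0 := by
        have : x1 ^ 2 = 0 := by rw [hx, hx0]; ring
        exact pow_eq_zero_iff (n := 2) (by norm_num) |>.mp this
      exact hne ⟨hx0, hx1, by rw [h2, hx1, mul_zero], by rw [h3, hx0, mul_zero]⟩
    · apply hsq (x1 / x0)
      field_simp
      linear_combination hx
  · rintro x0 x1 x2 x3 ⟨h1, h0⟩ hne hquad
    rw [h1, h0] at hquad
    have hfac : a ^ q ^ (3 - r) / ξ * (x3 ^ 2 - ξ * x2 ^ 2) = 0 := by
      field_simp
      field_simp at hquad
      linear_combination hquad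
    have hcoef : a ^ q ^ (3 - r) / ξ ≠ 0 := div_ne_zero hB hξ0
    have hx : x3 ^ 2 = ξ * x2 ^ 2 := by
      rcases mul_eq_zero.mp hfac with h | h
      · exact absurd h hcoef
      · linear_combination h
    by_cases hx2 : x2 = 0
    · have hx3 : x3 = 0 := by
        have : x3 ^ 2 = 0 := by rw [hx, hx2]; ring
        exact pow_eq_zero_iff (n := 2) (by norm_num) |>.mp this
      exact hne ⟨by rw [h0, hx3, mul_zero], by rw [h1, hx2, mul_zero], hx2, hx3⟩
    · apply hsq (x3 / x2)
      field_simp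
      linear_combination hx
end

section
/- Let q be an odd prime power, ξ a nonsquare in F_q, a ∈ F_{q^3}* with N_{q^3/q}(a) ∉ {-1,1}, and r ∈ {1,2}. For every x, y ∈ F_{q^3}, the vector (x, y, -a^{q^r+1}·y, -ξ·a^{q^r+1}·x) + (a^{q^{3-r}}·x^{q^r}, a^{q^{3-r}}·y^{q^r}, y^{q^r}, ξ·x^{q^r}) equals (z, w, A_{a,r}(w), ξ·A_{a,r}(z)) where z = x + a^{q^{3-r}}·x^{q^r} and w = y + a^{q^{3-r}}·y^{q^r}, and the map x ↦ x + a^{q^{3-r}}·x^{q^r} is a bijection of F_{q^3}. Consequently the linear set L_{D_A} = {⟨(z,w,A_{a,r}(w), ξ·A_{a,r}(z))⟩ : (z,w) ≠ (0,0)} equals the set of points ⟨u + f(u)⟩ as u ranges over nonzero vectors of the plane underlying t_1. -/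
/-- the identity defining the semilinear map `f` between the
transversals, bijectivity of `x ↦ x + a^{q^{3-r}} x^{q^r}`, and the resulting
description of the linear set `L_{D_A}`. -/
theorem stmt4 (q : ℕ) (hq : IsPrimePow q) (hodd : Odd q)
    (K : Type*) [Field K] [Fintype K] (hcard : Fintype.card K = q ^ 3)
    (ξ : K) (hξq : ξ ^ q = ξ) (hξns : ¬ ∃ c : K, c ^ q = c ∧ c ^ 2 = ξ)
    (a : K) (ha : a ≠ 0)
    (hN1 : a ^ (1 + q + q ^ 2) ≠ 1) (hN2 : a ^ (1 + q + q ^ 2) ≠ -1)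
    (r : ℕ) (hr : r = 1 ∨ r = 2) :
    let A : K → K := fun z => z ^ q ^ r - a * z ^ q ^ (3 - r)
    let g : K → K := fun x => x + a ^ q ^ (3 - r) * x ^ q ^ r
    -- the componentwise identity
    (∀ x y : K,
      (![x, y, -a ^ (q ^ r + 1) * y, -ξ * a ^ (q ^ r + 1) * x] +
        ![a ^ q ^ (3 - r) * x ^ q ^ r, a ^ q ^ (3 - r) * y ^ q ^ r,
          y ^ q ^ r, ξ * x ^ q ^ r] : Fin 4 → K) =
      ![g x, g y, A (g y), ξ * A (g x)]) ∧
    -- the map g is a bijection of K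
    Function.Bijective g ∧
    -- hence L_{D_A} = { <u + f(u)> : u in the plane of t1, u ≠ 0 }
    ({S : Submodule K (Fin 4 → K) | ∃ z w : K, ¬ (z = 0 ∧ w = 0) ∧
        S = Submodule.span K {![z, w, A w, ξ * A z]}} =
     {S : Submodule K (Fin 4 → K) | ∃ x y : K, ¬ (x = 0 ∧ y = 0) ∧
        S = Submodule.span K
          {(![x, y, -a ^ (q ^ r + 1) * y, -ξ * a ^ (q ^ r + 1) * x] +
            ![a ^ q ^ (3 - r) * x ^ q ^ r, a ^ q ^ (3 - r) * y ^ q ^ r,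
              y ^ q ^ r, ξ * x ^ q ^ r] : Fin 4 → K)}}) := by
  intro A g
  -- extract a prime p with q = p ^ k
  obtain ⟨p, k, hp, hk, hpk⟩ := hq
  rw [← Nat.prime_iff] at hp
  haveI : Fact p.Prime := ⟨hp⟩
  -- the characteristic of K is p
  haveI hKp : CharP K p := by
    haveI hc : CharP K (ringChar K) := ringChar.charP K
    obtain ⟨n, hcp, hcn⟩ := FiniteField.card K (ringChar K)
    have hqc : p ^ (k * 3) = (ringChar K) ^ (n : ℕ) := by
      rw [pow_mul, hpk, ← hcard, hcn]
    have hpc : p = ringChar K := by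
      have hdvd : p ∣ (ringChar K) ^ (n : ℕ) := by
        rw [← hqc]
        exact dvd_pow_self p (by positivity)
      have := hp.dvd_of_dvd_pow hdvd
      exact ((Nat.prime_dvd_prime_iff_eq hp hcp).mp this)
    rwa [hpc]
  have hq2 : 2 ≤ q := by
    rw [← hpk]
    calc 2 ≤ p := hp.two_le
    _ ≤ p ^ k := Nat.le_self_pow hk.ne' p
  -- basic Frobenius facts
  have hfrob : ∀ (s : ℕ) (x y : K), (x + y) ^ q ^ s = x ^ q ^ s + y ^ q ^ s := by
    intro s x y
    rw [← hpk, ← pow_mul]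
    exact add_pow_char_pow x y p (k * s)
  have hfrobsub : ∀ (s : ℕ) (x y : K), (x - y) ^ q ^ s = x ^ q ^ s - y ^ q ^ s := by
    intro s x y
    rw [← hpk, ← pow_mul]
    exact sub_pow_char_pow x y (k * s)
  have hcube : ∀ x : K, x ^ q ^ 3 = x := by
    intro x
    rw [← hcard]
    exact FiniteField.pow_card x
  have hr3 : r + (3 - r) = 3 := by omega
  have hRS : ∀ x : K, (x ^ q ^ r) ^ q ^ (3 - r) = x := by
    intro x
    rw [← pow_mul, ← pow_add, hr3, hcube]
  have hSR : ∀ x : K, (x ^ q ^ (3 - r)) ^ q ^ r = x := by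
    intro x
    rw [← pow_mul, ← pow_add]
    rw [show 3 - r + r = 3 by omega, hcube]
  have h2r : ∀ x : K, (x ^ q ^ r) ^ q ^ r = x ^ q ^ (3 - r) := by
    intro x
    rcases hr with rfl | rfl
    · rw [← pow_mul, ← pow_add]
    · rw [← pow_mul, show q ^ 2 * q ^ 2 = q ^ 3 * q by ring, pow_mul, hcube]
      norm_num
  have h2s : ∀ x : K, (x ^ q ^ (3 - r)) ^ q ^ (3 - r) = x ^ q ^ r := by
    intro x
    rcases hr with rfl | rfl
    · show (x ^ q ^ 2) ^ q ^ 2 = x ^ q ^ 1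
      rw [← pow_mul, show q ^ 2 * q ^ 2 = q ^ 3 * q by ring, pow_mul, hcube, pow_one]
    · show (x ^ q ^ 1) ^ q ^ 1 = x ^ q ^ 2
      rw [← pow_mul, ← pow_add]
  -- the key identity
  have hkey : ∀ x : K,
      (x + a ^ q ^ (3 - r) * x ^ q ^ r) ^ q ^ r
        - a * (x + a ^ q ^ (3 - r) * x ^ q ^ r) ^ q ^ (3 - r)
      = -a ^ (q ^ r + 1) * x + x ^ q ^ r := by
    intro x
    rw [hfrob, hfrob, mul_pow, mul_pow, hSR, h2r, h2s, hRS, pow_add, pow_one]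
    ring
  -- the map g kills only zero
  have hoddN : Odd (1 + q + q ^ 2) := by
    obtain ⟨m, rfl⟩ := hodd
    exact ⟨2 * m ^ 2 + 3 * m + 1, by ring⟩
  have hNq : ∀ u : K, (u ^ (1 + q + q ^ 2)) ^ q = u ^ (1 + q + q ^ 2) := by
    intro u
    have h1 : u ^ ((1 + q + q ^ 2) * q) = u * u ^ q * u ^ q ^ 2 := by
      rw [show (1 + q + q ^ 2) * q = q ^ 3 + q + q ^ 2 by ring, pow_add, pow_add, hcube]
    have h2 : u ^ (1 + q + q ^ 2) = u * u ^ q * u ^ q ^ 2 := by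
      rw [pow_add, pow_add, pow_one]
    rw [← pow_mul, h1, h2]
  have hNqs : ∀ (u : K) (s : ℕ), (u ^ (1 + q + q ^ 2)) ^ q ^ s = u ^ (1 + q + q ^ 2) := by
    intro u s
    induction s with
    | zero => rw [pow_zero, pow_one]
    | succ n ih => rw [pow_succ q n, pow_mul, ih, hNq]
  have hg0 : ∀ x : K, x + a ^ q ^ (3 - r) * x ^ q ^ r = 0 → x = 0 := by
    intro x hx
    by_contra hx0
    have h1 : a ^ q ^ (3 - r) * x ^ q ^ r = -x := eq_neg_of_add_eq_zero_right hx
    have h2 : (a ^ q ^ (3 - r) * x ^ q ^ r) ^ (1 + q + q ^ 2)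
        = (-x) ^ (1 + q + q ^ 2) := by rw [h1]
    rw [mul_pow, pow_right_comm a (q ^ (3 - r)) (1 + q + q ^ 2),
      pow_right_comm x (q ^ r) (1 + q + q ^ 2)] at h2
    rw [show (a ^ (1 + q + q ^ 2)) ^ q ^ (3 - r) = a ^ (1 + q + q ^ 2) from hNqs a _,
      show (x ^ (1 + q + q ^ 2)) ^ q ^ r = x ^ (1 + q + q ^ 2) from hNqs x _,
      hoddN.neg_pow] at h2
    have hxN : x ^ (1 + q + q ^ 2) ≠ 0 := pow_ne_zero _ hx0
    have : a ^ (1 + q + q ^ 2) = -1 := by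
      have h3 : (a ^ (1 + q + q ^ 2) + 1) * x ^ (1 + q + q ^ 2) = 0 := by
        rw [add_mul, h2]; ring
      rcases mul_eq_zero.mp h3 with h | h
      · exact eq_neg_of_add_eq_zero_left h
      · exact absurd h hxN
    exact hN2 this
  have hginj : Function.Injective g := by
    intro x1 x2 h
    have hsub : g x1 - g x2 = (x1 - x2) + a ^ q ^ (3 - r) * (x1 - x2) ^ q ^ r := by
      show (x1 + a ^ q ^ (3 - r) * x1 ^ q ^ r) - (x2 + a ^ q ^ (3 - r) * x2 ^ q ^ r) = _
      rw [hfrobsub]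
      ring
    have h0 : (x1 - x2) + a ^ q ^ (3 - r) * (x1 - x2) ^ q ^ r = 0 := by
      rw [← hsub, h, sub_self]
    have := hg0 _ h0
    exact sub_eq_zero.mp this
  have hgbij : Function.Bijective g := Finite.injective_iff_bijective.mp hginj
  -- the componentwise identity
  have hid : ∀ x y : K,
      (![x, y, -a ^ (q ^ r + 1) * y, -ξ * a ^ (q ^ r + 1) * x] +
        ![a ^ q ^ (3 - r) * x ^ q ^ r, a ^ q ^ (3 - r) * y ^ q ^ r,
          y ^ q ^ r, ξ * x ^ q ^ r] : Fin 4 → K) =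
      ![g x, g y, A (g y), ξ * A (g x)] := by
    intro x y
    funext i
    fin_cases i
    · show x + a ^ q ^ (3 - r) * x ^ q ^ r = g x
      rfl
    · show y + a ^ q ^ (3 - r) * y ^ q ^ r = g y
      rfl
    · show -a ^ (q ^ r + 1) * y + y ^ q ^ r = A (g y)
      exact (hkey y).symm
    · show -ξ * a ^ (q ^ r + 1) * x + ξ * x ^ q ^ r = ξ * A (g x)
      show -ξ * a ^ (q ^ r + 1) * x + ξ * x ^ q ^ r
        = ξ * ((x + a ^ q ^ (3 - r) * x ^ q ^ r) ^ q ^ r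
            - a * (x + a ^ q ^ (3 - r) * x ^ q ^ r) ^ q ^ (3 - r))
      rw [hkey x]
      ring
  refine ⟨hid, hgbij, ?_⟩
  -- the set equality
  have hg00 : g 0 = 0 := by
    show (0 : K) + a ^ q ^ (3 - r) * (0 : K) ^ q ^ r = 0
    rw [zero_pow (by positivity)]
    ring
  ext S
  simp only [Set.mem_setOf_eq]
  constructor
  · rintro ⟨z, w, hzw, rfl⟩
    obtain ⟨x, hx⟩ := hgbij.2 z
    obtain ⟨y, hy⟩ := hgbij.2 w
    refine ⟨x, y, ?_, ?_⟩
    · rintro ⟨rfl, rfl⟩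
      exact hzw ⟨by rw [← hx, hg00], by rw [← hy, hg00]⟩
    · rw [hid x y, hx, hy]
  · rintro ⟨x, y, hxy, rfl⟩
    refine ⟨g x, g y, ?_, ?_⟩
    · rintro ⟨h1, h2⟩
      exact hxy ⟨hg0 x h1, hg0 y h2⟩
    · rw [hid x y]
end

section
/- Let q be an odd prime power and let the map φ : F_{q^3}^4 → F_{q^6}^2 be defined by φ(x_0,x_1,x_2,x_3) = (x_0 + x_3 + (x_1 + ξ·x_2)·ω, x_0 - x_3 + (x_1 - ξ·x_2)·ω), where ξ ∈ F_q is a nonsquare and ω ∈ F_{q^2} ⊂ F_{q^6} satisfies ω² = 1/ξ. Then φ is an F_{q^3}-linear bijection, and a nonzero vector (x_0,x_1,x_2,x_3) satisfies x_0·x_3 - x_1·x_2 = 0 if and only if its image (X, Y) = φ(x_0,x_1,x_2,x_3) satisfies X^{q^3+1} - Y^{q^3+1} = 0. -/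
/-- Auxiliary: a finite field of cardinality `p ^ n` (with `p` prime, `n > 0`)
has characteristic `p`. -/
lemma charP_of_card_pow (F : Type*) [Field F] [Fintype F] (p n : ℕ)
    (hp : p.Prime) (hn : 0 < n) (h : Fintype.card F = p ^ n) : CharP F p := by
  obtain ⟨r, hr⟩ := CharP.exists F
  haveI := hr
  have hrprime : r.Prime := CharP.char_is_prime F r
  have hdvd : r ∣ p ^ n := h ▸ (CharP.cast_eq_zero_iff F r
      (Fintype.card F)).mp (FiniteField.cast_card_eq_zero F)
  have : r = p := by
    have := hrprime.dvd_of_dvd_pow hdvd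
    exact (Nat.prime_dvd_prime_iff_eq hrprime hp).mp this
  exact this ▸ hr

/-- the map `φ` from `F_{q^3}^4` to `F_{q^6}^2` is an
`F_{q^3}`-linear bijection mapping the quadric `X_0X_3 - X_1X_2 = 0` onto the
quadric `X^{q^3+1} - Y^{q^3+1} = 0`. -/
theorem stmt5 (q : ℕ) (hq : IsPrimePow q) (hodd : Odd q)
    (K L : Type*) [Field K] [Fintype K] [Field L] [Fintype L] [Algebra K L]
    (hK : Fintype.card K = q ^ 3) (hL : Fintype.card L = q ^ 6)
    (ξ : K) (hξq : ξ ^ q = ξ) (hξns : ¬ ∃ c : K, c ^ q = c ∧ c ^ 2 = ξ)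
    (ω : L) (hω2 : ω ^ q ^ 2 = ω) (hωnot : ω ^ q ≠ ω)
    (hωsq : ω ^ 2 = (algebraMap K L ξ)⁻¹) :
    let ι := algebraMap K L
    let φ : K × K × K × K → L × L := fun v =>
      (ι (v.1 + v.2.2.2) + ι (v.2.1 + ξ * v.2.2.1) * ω,
       ι (v.1 - v.2.2.2) + ι (v.2.1 - ξ * v.2.2.1) * ω)
    Function.Bijective φ ∧
    (∀ u v : K × K × K × K, φ (u + v) = φ u + φ v) ∧
    (∀ (c : K) (v : K × K × K × K), φ (c • v) = c • φ v) ∧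
    (∀ v : K × K × K × K, v ≠ 0 →
      (v.1 * v.2.2.2 - v.2.1 * v.2.2.1 = 0 ↔
        (φ v).1 ^ (q ^ 3 + 1) - (φ v).2 ^ (q ^ 3 + 1) = 0)) := by
  intro ι φ
  obtain ⟨p, k, hp, hk, hpk⟩ := hq
  have hp' : p.Prime := hp.nat_prime
  -- p is odd
  have hpodd : Odd p := by
    rcases Nat.even_or_odd p with h | h
    · exfalso
      have : Even q := by
        rw [← hpk]; exact (Nat.even_pow).mpr ⟨h, hk.ne'⟩
      exact (Nat.not_even_iff_odd.mpr hodd) this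
    · exact h
  have hpne2 : p ≠ 2 := by
    intro h; rw [h] at hpodd; exact (Nat.not_even_iff_odd.mpr hpodd) (even_two)
  haveI hcharK : CharP K p := charP_of_card_pow K p (3 * k) hp' (by omega)
    (by rw [hK, ← hpk, ← pow_mul, mul_comm])
  haveI hcharL : CharP L p := charP_of_card_pow L p (6 * k) hp' (by omega)
    (by rw [hL, ← hpk, ← pow_mul, mul_comm])
  have hpdvd : ∀ m : ℕ, p ∣ m → m = 2 ∨ m = 4 → False := by
    intro m hdvd hm
    have h2 : p ∣ 2 := by
      rcases hm with rfl | rfl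
      · exact hdvd
      · exact hp'.dvd_of_dvd_pow (n := 2) (by norm_num at hdvd ⊢; exact hdvd)
    exact hpne2 ((Nat.prime_dvd_prime_iff_eq hp' Nat.prime_two).mp h2)
  have h2K : (2 : K) ≠ 0 := by
    intro h
    exact hpdvd 2 ((CharP.cast_eq_zero_iff K p 2).mp h) (Or.inl rfl)
  have h4K : (4 : K) ≠ 0 := by
    intro h
    exact hpdvd 4 ((CharP.cast_eq_zero_iff K p 4).mp h) (Or.inr rfl)
  have h2L : (2 : L) ≠ 0 := by
    intro h
    exact hpdvd 2 ((CharP.cast_eq_zero_iff L p 2).mp h) (Or.inl rfl)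
  have hιinj : Function.Injective ι := (algebraMap K L).injective
  have hι0 : ∀ a : K, ι a = 0 ↔ a = 0 := fun a => map_eq_zero ι
  -- ξ ≠ 0
  have hξ0 : ξ ≠ 0 := by
    intro h
    have hq0 : q ≠ 0 := by have := Nat.odd_iff.mp hodd; omega
    exact hξns ⟨0, by rw [zero_pow hq0], by rw [h]; ring⟩
  have hιξ : ι ξ ≠ 0 := fun h => hξ0 ((hι0 ξ).mp h)
  -- ω ≠ 0
  have hω0 : ω ≠ 0 := by
    intro h
    rw [h] at hωsq
    apply hιξ
    rw [← inv_eq_zero, ← hωsq]; ring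
  -- Frobenius fixes the image of K
  have hFK : ∀ a : K, (ι a) ^ q ^ 3 = ι a := by
    intro a
    rw [← map_pow, ← hK, FiniteField.pow_card]
  -- ω ^ q = -ω
  have hωq : ω ^ q = -ω := by
    have h1 : (ω ^ q) ^ 2 = ω ^ 2 := by
      rw [← pow_mul, mul_comm, pow_mul, hωsq, inv_pow, ← map_pow, hξq]
    have h2 : (ω ^ q - ω) * (ω ^ q + ω) = 0 := by linear_combination h1
    rcases mul_eq_zero.mp h2 with h | h
    · exact absurd (sub_eq_zero.mp h) hωnot
    · exact eq_neg_of_add_eq_zero_left h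
  have hωQ : ω ^ q ^ 3 = -ω := by
    have : ω ^ q ^ 3 = (ω ^ q ^ 2) ^ q := by
      rw [← pow_mul]; ring_nf
    rw [this, hω2, hωq]
  -- Frobenius is additive
  haveI : Fact p.Prime := ⟨hp'⟩
  have hFadd : ∀ x y : L, (x + y) ^ q ^ 3 = x ^ q ^ 3 + y ^ q ^ 3 := by
    intro x y
    have hq3 : q ^ 3 = p ^ (3 * k) := by rw [← hpk, ← pow_mul, mul_comm]
    rw [hq3]
    exact add_pow_char_pow (R := L) (x := x) (y := y) (p := p) (n := 3 * k)
  -- the norm formula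
  have hnorm : ∀ A B : K, (ι A + ι B * ω) ^ (q ^ 3 + 1)
      = ι A ^ 2 - ι B ^ 2 * (ι ξ)⁻¹ := by
    intro A B
    have hF : (ι A + ι B * ω) ^ q ^ 3 = ι A - ι B * ω := by
      rw [hFadd, mul_pow, hFK, hFK, hωQ]; ring
    rw [pow_succ, hF]
    linear_combination (-(ι B) ^ 2) * hωsq
  -- the key computation
  have key : ∀ v : K × K × K × K,
      (φ v).1 ^ (q ^ 3 + 1) - (φ v).2 ^ (q ^ 3 + 1)
        = ι 4 * ι (v.1 * v.2.2.2 - v.2.1 * v.2.2.1) := by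
    intro v
    show (ι (v.1 + v.2.2.2) + ι (v.2.1 + ξ * v.2.2.1) * ω) ^ (q ^ 3 + 1)
        - (ι (v.1 - v.2.2.2) + ι (v.2.1 - ξ * v.2.2.1) * ω) ^ (q ^ 3 + 1) = _
    rw [hnorm, hnorm]
    simp only [map_add, map_sub, map_mul, map_ofNat]
    field_simp
    ring
  -- linear independence of 1 and ω over K
  have hli : ∀ a b : K, ι a + ι b * ω = 0 → a = 0 ∧ b = 0 := by
    intro a b h
    by_cases hb : b = 0
    · subst hb
      simp only [map_zero, zero_mul, add_zero] at h
      exact ⟨(hι0 a).mp h, rfl⟩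
    · exfalso
      have hιb : ι b ≠ 0 := fun hh => hb ((hι0 b).mp hh)
      have hω : ω = ι (-a / b) := by
        have hh : ι b * ω = -ι a := by linear_combination h
        rw [map_div₀, map_neg, eq_div_iff hιb]
        linear_combination hh
      have h3 : ω ^ q ^ 3 = ω := by rw [hω, hFK]
      rw [hωQ] at h3
      have h4 : (2 : L) * ω = 0 := by linear_combination -h3
      rcases mul_eq_zero.mp h4 with h | h
      · exact h2L h
      · exact hω0 h
  -- additivity
  have hadd : ∀ u v : K × K × K × K, φ (u + v) = φ u + φ v := by
    intro u v
    simp only [φ, Prod.fst_add, Prod.snd_add, Prod.mk_add_mk, Prod.mk.injEq,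
      map_add, map_sub, map_mul]
    constructor <;> ring
  -- injectivity
  have hinj : Function.Injective φ := by
    intro u v huv
    have hsub : φ (u - v) = 0 := by
      have h1 := hadd (u - v) v
      rw [sub_add_cancel, huv] at h1
      have : φ (u - v) + φ v - φ v = φ v - φ v := by rw [← h1]
      simpa using this
    have h1 : ι ((u - v).1 + (u - v).2.2.2) + ι ((u - v).2.1 + ξ * (u - v).2.2.1) * ω = 0 :=
      congrArg Prod.fst hsub
    have h2 : ι ((u - v).1 - (u - v).2.2.2) + ι ((u - v).2.1 - ξ * (u - v).2.2.1) * ω = 0 :=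
      congrArg Prod.snd hsub
    obtain ⟨e1, e2⟩ := hli _ _ h1
    obtain ⟨e3, e4⟩ := hli _ _ h2
    have w0 : (u - v).1 = 0 := by
      have : (2 : K) * (u - v).1 = 0 := by linear_combination e1 + e3
      rcases mul_eq_zero.mp this with h | h
      · exact absurd h h2K
      · exact h
    have w3 : (u - v).2.2.2 = 0 := by linear_combination e1 - w0
    have w1 : (u - v).2.1 = 0 := by
      have : (2 : K) * (u - v).2.1 = 0 := by linear_combination e2 + e4
      rcases mul_eq_zero.mp this with h | h
      · exact absurd h h2K
      · exact h
    have w2 : (u - v).2.2.1 = 0 := by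
      have : ξ * (u - v).2.2.1 = 0 := by linear_combination e2 - w1
      rcases mul_eq_zero.mp this with h | h
      · exact absurd h hξ0
      · exact h
    have : u - v = 0 := by
      rw [Prod.ext_iff, Prod.ext_iff, Prod.ext_iff]
      exact ⟨w0, w1, w2, w3⟩
    linear_combination (norm := abel) this
  -- cardinality
  have hcard : Fintype.card (K × K × K × K) = Fintype.card (L × L) := by
    simp only [Fintype.card_prod, hK, hL, ← pow_mul]
    ring
  refine ⟨(Fintype.bijective_iff_injective_and_card φ).mpr ⟨hinj, hcard⟩, hadd, ?_, ?_⟩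
  · intro c v
    obtain ⟨a, b, c', d⟩ := v
    have hs : ∀ x : L, c • x = ι c * x := fun x => Algebra.smul_def c x
    simp only [φ, Prod.smul_mk, smul_eq_mul, hs, Prod.mk.injEq, map_add, map_sub, map_mul]
    constructor <;> ring
  · intro v _
    rw [key v]
    constructor
    · intro h; rw [h, map_zero, mul_zero]
    · intro h
      rcases mul_eq_zero.mp h with h | h
      · exact absurd ((hι0 4).mp h) h4K
      · exact (hι0 _).mp h
end

section
/- Let q be an odd prime power, ξ a nonsquare in F_q, and b ∈ F_{q^3}* with N_{q^3/q}(b²) ∉ {-1,1}. In PG(3,q^3), the lines t_1 : {X_2 = b^{-2q^{3-r}}·X_1, X_3 = ξ·X_0} and t_2 : {b^{-2q^r}·X_2 = -b²·X_1, X_3 = -ξ·X_0} are disjoint, both external to the hyperbolic quadric Q : X_0X_3 - X_1X_2 = 0, and the intersection t_1^⊥ ∩ t_2 is exactly the single point ⟨(1,0,0,-ξ)⟩, where ⊥ is the polarity induced by Q. -/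
theorem aux9 (q : ℕ) (K : Type*) [Field K]
    (h2 : (2:K) ≠ 0)
    (ξ : K) (hξ0 : ξ ≠ 0) (hξq : ξ ^ q = ξ)
    (hξns : ¬ ∃ c : K, c ^ q = c ∧ c ^ 2 = ξ)
    (b : K) (hb : b ≠ 0)
    (hN1 : b ^ (2 * (1 + q + q ^ 2)) ≠ 1) (hN2 : b ^ (2 * (1 + q + q ^ 2)) ≠ -1)
    (hfixq : ∀ z : K, (z ^ (1 + q + q ^ 2)) ^ q = z ^ (1 + q + q ^ 2))
    (u v : ℕ)
    (huv : b ^ (2 * (1 + q + q ^ 2)) = b ^ 2 * b ^ (2 * u) * b ^ (2 * v))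
    (hufix : ((b ^ 2) ^ (1 + q + q ^ 2)) ^ u = (b ^ 2) ^ (1 + q + q ^ 2))
    (hvfix : ((b ^ 2) ^ (1 + q + q ^ 2)) ^ v = (b ^ 2) ^ (1 + q + q ^ 2)) :
    (∀ x0 x1 x2 x3 : K,
      (x2 = (b ^ (2 * v))⁻¹ * x1 ∧ x3 = ξ * x0) →
      ((b ^ (2 * u))⁻¹ * x2 = -b ^ 2 * x1 ∧ x3 = -ξ * x0) →
      x0 = 0 ∧ x1 = 0 ∧ x2 = 0 ∧ x3 = 0) ∧
    (∀ x0 x1 x2 x3 : K,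
      (x2 = (b ^ (2 * v))⁻¹ * x1 ∧ x3 = ξ * x0) →
      ¬ (x0 = 0 ∧ x1 = 0 ∧ x2 = 0 ∧ x3 = 0) →
      x0 * x3 - x1 * x2 ≠ 0) ∧
    (∀ x0 x1 x2 x3 : K,
      ((b ^ (2 * u))⁻¹ * x2 = -b ^ 2 * x1 ∧ x3 = -ξ * x0) →
      ¬ (x0 = 0 ∧ x1 = 0 ∧ x2 = 0 ∧ x3 = 0) →
      x0 * x3 - x1 * x2 ≠ 0) ∧
    (∀ x0 x1 x2 x3 : K, ¬ (x0 = 0 ∧ x1 = 0 ∧ x2 = 0 ∧ x3 = 0) →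
      (((∀ y0 y1 y2 y3 : K,
          (y2 = (b ^ (2 * v))⁻¹ * y1 ∧ y3 = ξ * y0) →
          x0 * y3 + x3 * y0 - x1 * y2 - x2 * y1 = 0) ∧
        ((b ^ (2 * u))⁻¹ * x2 = -b ^ 2 * x1 ∧ x3 = -ξ * x0)) ↔
      (∃ c : K, c ≠ 0 ∧ x0 = c ∧ x1 = 0 ∧ x2 = 0 ∧ x3 = -c * ξ))) := by
  have hA : b ^ (2 * v) ≠ 0 := pow_ne_zero _ hb
  have hB : b ^ (2 * u) ≠ 0 := pow_ne_zero _ hb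
  have hbn : b ^ (1 + q + q ^ 2) ≠ 0 := pow_ne_zero _ hb
  have hξn : ξ ^ (1 + q + q ^ 2) = ξ ^ 3 := by
    have hq2 : ξ ^ (q ^ 2) = ξ := by
      rw [pow_two, pow_mul, hξq, hξq]
    rw [pow_add, pow_add, hξq, hq2]; ring
  -- norms of the relevant powers of b
  have hvfix' : (b ^ (2 * (1 + q + q ^ 2))) ^ v = b ^ (2 * (1 + q + q ^ 2)) := by
    rw [pow_mul]; exact hvfix
  have hufix' : (b ^ (2 * (1 + q + q ^ 2))) ^ u = b ^ (2 * (1 + q + q ^ 2)) := by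
    rw [pow_mul]; exact hufix
  have hbv : (b ^ (2 * v)) ^ (1 + q + q ^ 2) = (b ^ (1 + q + q ^ 2)) ^ 2 := by
    rw [← pow_mul, ← pow_mul,
      show 2 * v * (1 + q + q ^ 2) = 2 * (1 + q + q ^ 2) * v from by ring, pow_mul, hvfix']
    congr 1; ring
  have hbu : (b ^ (2 * u)) ^ (1 + q + q ^ 2) = (b ^ (1 + q + q ^ 2)) ^ 2 := by
    rw [← pow_mul, ← pow_mul,
      show 2 * u * (1 + q + q ^ 2) = 2 * (1 + q + q ^ 2) * u from by ring, pow_mul, hufix']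
    congr 1; ring
  -- the key nonsquare contradiction
  have key : ∀ y e g : K, g ≠ 0 → g ^ q = g → e ^ (1 + q + q ^ 2) = g ^ 2 →
      ξ ≠ y ^ 2 * e := by
    intro y e g hg0 hgq hen h
    apply hξns
    refine ⟨y ^ (1 + q + q ^ 2) * g * ξ⁻¹, ?_, ?_⟩
    · rw [mul_pow, mul_pow, hfixq, hgq, inv_pow, hξq]
    · have h1 : (y ^ (1 + q + q ^ 2) * g) ^ 2 = ξ ^ 3 := by
        have h2' : (y ^ (1 + q + q ^ 2) * g) ^ 2 = (y ^ 2 * e) ^ (1 + q + q ^ 2) := by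
          rw [mul_pow, mul_pow, ← hen, ← pow_mul, ← pow_mul, Nat.mul_comm]
        rw [h2', ← h, hξn]
      have hξi : ξ * ξ⁻¹ = 1 := mul_inv_cancel₀ hξ0
      linear_combination (ξ⁻¹) ^ 2 * h1 + ξ * (ξ * ξ⁻¹ + 1) * hξi
  refine ⟨?_, ?_, ?_, ?_⟩
  · -- disjointness
    intro x0 x1 x2 x3 ⟨h11, h12⟩ ⟨h21, h22⟩
    have hx0 : x0 = 0 := by
      have h : (2 : K) * (ξ * x0) = 0 := by rw [h12] at h22; linear_combination h22
      rcases mul_eq_zero.mp h with h | h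
      · exact absurd h h2
      · rcases mul_eq_zero.mp h with h | h
        · exact absurd h hξ0
        · exact h
    have hx1 : x1 = 0 := by
      have e0 : (b ^ (2 * u))⁻¹ * ((b ^ (2 * v))⁻¹ * x1) = -b ^ 2 * x1 := by
        rw [← h11]; exact h21
      have e : x1 = b ^ (2 * v) * (b ^ (2 * u) * (-b ^ 2 * x1)) := by
        calc x1 = b ^ (2 * v) * ((b ^ (2 * v))⁻¹ * x1) := (mul_inv_cancel_left₀ hA x1).symm
          _ = b ^ (2 * v) * (b ^ (2 * u) * ((b ^ (2 * u))⁻¹ * ((b ^ (2 * v))⁻¹ * x1))) := by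
              rw [mul_inv_cancel_left₀ hB]
          _ = b ^ (2 * v) * (b ^ (2 * u) * (-b ^ 2 * x1)) := by rw [e0]
      have e3 : x1 * (1 + b ^ 2 * b ^ (2 * u) * b ^ (2 * v)) = 0 := by linear_combination e
      rcases mul_eq_zero.mp e3 with h | h
      · exact h
      · exact absurd (by rw [huv]; linear_combination h) hN2
    exact ⟨hx0, hx1, by rw [h11, hx1, mul_zero], by rw [h12, hx0, mul_zero]⟩
  · -- t1 external
    intro x0 x1 x2 x3 ⟨h11, h12⟩ hnz h0
    rw [h11, h12] at h0
    have hx0 : x0 ≠ 0 := by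
      intro hx0
      rw [hx0] at h0
      have hx1 : x1 = 0 := by
        have h : x1 * ((b ^ (2 * v))⁻¹ * x1) = 0 := by linear_combination -h0
        rcases mul_eq_zero.mp h with h | h
        · exact h
        · rcases mul_eq_zero.mp h with h | h
          · exact absurd h (inv_ne_zero hA)
          · exact h
      exact hnz ⟨hx0, hx1, by rw [h11, hx1, mul_zero], by rw [h12, hx0, mul_zero]⟩
    have h1 : x0 * x0⁻¹ = 1 := mul_inv_cancel₀ hx0
    have hξeq : ξ = (x1 * x0⁻¹) ^ 2 * (b ^ (2 * v))⁻¹ := by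
      linear_combination (x0⁻¹) ^ 2 * h0 - ξ * (1 + x0 * x0⁻¹) * h1
    exact key (x1 * x0⁻¹) ((b ^ (2 * v))⁻¹) ((b ^ (1 + q + q ^ 2))⁻¹) (inv_ne_zero hbn)
      (by rw [inv_pow, hfixq]) (by rw [inv_pow, inv_pow, hbv]) hξeq
  · -- t2 external
    intro x0 x1 x2 x3 ⟨h21, h22⟩ hnz h0
    have hx2 : x2 = b ^ (2 * u) * (-b ^ 2 * x1) := by
      rw [← h21, mul_inv_cancel_left₀ hB]
    rw [hx2, h22] at h0
    have hx0 : x0 ≠ 0 := by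
      intro hx0
      rw [hx0] at h0
      have hx1 : x1 = 0 := by
        have h : (b ^ (2 * u) * b ^ 2) * (x1 * x1) = 0 := by linear_combination h0
        rcases mul_eq_zero.mp h with h | h
        · exact absurd h (mul_ne_zero hB (pow_ne_zero _ hb))
        · rcases mul_eq_zero.mp h with h | h <;> exact h
      exact hnz ⟨hx0, hx1, by rw [hx2, hx1, mul_zero, mul_zero], by rw [h22, hx0, mul_zero]⟩
    have h1 : x0 * x0⁻¹ = 1 := mul_inv_cancel₀ hx0
    have hξeq : ξ = (x1 * x0⁻¹) ^ 2 * (b ^ (2 * u) * b ^ 2) := by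
      linear_combination (-(x0⁻¹ ^ 2)) * h0 - ξ * (1 + x0 * x0⁻¹) * h1
    exact key (x1 * x0⁻¹) (b ^ (2 * u) * b ^ 2) ((b ^ 2) ^ (1 + q + q ^ 2))
      (pow_ne_zero _ (pow_ne_zero _ hb)) (hfixq _)
      (by rw [mul_pow, hbu]; rw [← pow_mul, ← pow_mul]; ring) hξeq
  · -- perp intersection
    intro x0 x1 x2 x3 hnz
    constructor
    · rintro ⟨hperp, h21, h22⟩
      have hx2 : x2 = -((b ^ (2 * v))⁻¹ * x1) := by
        have h := hperp 0 1 ((b ^ (2 * v))⁻¹ * 1) (ξ * 0) ⟨rfl, rfl⟩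
        linear_combination -h
      have hx1 : x1 = 0 := by
        have e0 : (b ^ (2 * u))⁻¹ * ((b ^ (2 * v))⁻¹ * x1) = b ^ 2 * x1 := by
          have := h21; rw [hx2] at this; linear_combination -this
        have e : x1 = b ^ (2 * v) * (b ^ (2 * u) * (b ^ 2 * x1)) := by
          calc x1 = b ^ (2 * v) * ((b ^ (2 * v))⁻¹ * x1) := (mul_inv_cancel_left₀ hA x1).symm
            _ = b ^ (2 * v) * (b ^ (2 * u) * ((b ^ (2 * u))⁻¹ * ((b ^ (2 * v))⁻¹ * x1))) := by
                rw [mul_inv_cancel_left₀ hB]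
            _ = b ^ (2 * v) * (b ^ (2 * u) * (b ^ 2 * x1)) := by rw [e0]
        have e3 : x1 * (b ^ 2 * b ^ (2 * u) * b ^ (2 * v) - 1) = 0 := by linear_combination -e
        rcases mul_eq_zero.mp e3 with h | h
        · exact h
        · exact absurd (by rw [huv]; linear_combination h) hN1
      have hx2' : x2 = 0 := by rw [hx2, hx1, mul_zero, neg_zero]
      have hx0 : x0 ≠ 0 := by
        intro h
        exact hnz ⟨h, hx1, hx2', by rw [h22, h, mul_zero]⟩
      exact ⟨x0, hx0, rfl, hx1, hx2', by rw [h22]; ring⟩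
    · rintro ⟨c, hc, rfl, rfl, rfl, rfl⟩
      refine ⟨?_, by rw [mul_zero, mul_zero], by ring⟩
      intro y0 y1 y2 y3 ⟨hy2, hy3⟩
      rw [hy3]; ring

/-- for the `D_{AB}` presemifields, the transversal lines `t_1`
and `t_2` are disjoint, both external to the quadric `X_0X_3 - X_1X_2 = 0`,
and `t_1^⊥ ∩ t_2` is the single point `⟨(1,0,0,-ξ)⟩`. -/
theorem stmt9 (q : ℕ) (hq : IsPrimePow q) (hodd : Odd q)
    (K : Type*) [Field K] [Fintype K] (hcard : Fintype.card K = q ^ 3)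
    (ξ : K) (hξq : ξ ^ q = ξ) (hξns : ¬ ∃ c : K, c ^ q = c ∧ c ^ 2 = ξ)
    (b : K) (hb : b ≠ 0)
    (hN1 : b ^ (2 * (1 + q + q ^ 2)) ≠ 1) (hN2 : b ^ (2 * (1 + q + q ^ 2)) ≠ -1)
    (r : ℕ) (hr : r = 1 ∨ r = 2) :
    (∀ x0 x1 x2 x3 : K,
      (x2 = (b ^ (2 * q ^ (3 - r)))⁻¹ * x1 ∧ x3 = ξ * x0) →
      ((b ^ (2 * q ^ r))⁻¹ * x2 = -b ^ 2 * x1 ∧ x3 = -ξ * x0) →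
      x0 = 0 ∧ x1 = 0 ∧ x2 = 0 ∧ x3 = 0) ∧
    (∀ x0 x1 x2 x3 : K,
      (x2 = (b ^ (2 * q ^ (3 - r)))⁻¹ * x1 ∧ x3 = ξ * x0) →
      ¬ (x0 = 0 ∧ x1 = 0 ∧ x2 = 0 ∧ x3 = 0) →
      x0 * x3 - x1 * x2 ≠ 0) ∧
    (∀ x0 x1 x2 x3 : K,
      ((b ^ (2 * q ^ r))⁻¹ * x2 = -b ^ 2 * x1 ∧ x3 = -ξ * x0) →
      ¬ (x0 = 0 ∧ x1 = 0 ∧ x2 = 0 ∧ x3 = 0) →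
      x0 * x3 - x1 * x2 ≠ 0) ∧
    (∀ x0 x1 x2 x3 : K, ¬ (x0 = 0 ∧ x1 = 0 ∧ x2 = 0 ∧ x3 = 0) →
      (((∀ y0 y1 y2 y3 : K,
          (y2 = (b ^ (2 * q ^ (3 - r)))⁻¹ * y1 ∧ y3 = ξ * y0) →
          x0 * y3 + x3 * y0 - x1 * y2 - x2 * y1 = 0) ∧
        ((b ^ (2 * q ^ r))⁻¹ * x2 = -b ^ 2 * x1 ∧ x3 = -ξ * x0)) ↔
      (∃ c : K, c ≠ 0 ∧ x0 = c ∧ x1 = 0 ∧ x2 = 0 ∧ x3 = -c * ξ))) := by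
  have hq3 : ∀ x : K, x ^ (q ^ 3) = x := fun x => by
    rw [← hcard]; exact FiniteField.pow_card x
  have h2 : (2 : K) ≠ 0 := by
    intro h
    have hdvd : ringChar K ∣ 2 := (CharP.cast_eq_zero_iff K (ringChar K) 2).mp (by exact_mod_cast h)
    have hne1 : ringChar K ≠ 1 := CharP.ringChar_ne_one
    have hne0 : ringChar K ≠ 0 := by
      intro h0; rw [h0] at hdvd; exact (by norm_num : ¬ ((0:ℕ) ∣ 2)) hdvd
    have hchar2 : ringChar K = 2 := by
      have := Nat.le_of_dvd (by norm_num) hdvd; omega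
    have heven := FiniteField.even_card_of_char_two hchar2
    have hoddc : Fintype.card K % 2 = 1 := Nat.odd_iff.mp (by rw [hcard]; exact hodd.pow)
    omega
  have hq0 : q ≠ 0 := by have := hq.pos; omega
  have hξ0 : ξ ≠ 0 := by
    intro h
    exact hξns ⟨0, by rw [zero_pow hq0], by rw [h]; norm_num⟩
  have hfixq : ∀ z : K, (z ^ (1 + q + q ^ 2)) ^ q = z ^ (1 + q + q ^ 2) := by
    intro z
    have h1 : (z ^ (1 + q + q ^ 2)) ^ q = z ^ ((q + q ^ 2) + q ^ 3) := by
      rw [← pow_mul]; congr 1; ring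
    rw [h1, pow_add, hq3 z]; ring
  have hfixq1 : ∀ z : K, (z ^ (1 + q + q ^ 2)) ^ (q ^ 1) = z ^ (1 + q + q ^ 2) := fun z => by
    rw [pow_one]; exact hfixq z
  have hfixq2 : ∀ z : K, (z ^ (1 + q + q ^ 2)) ^ (q ^ 2) = z ^ (1 + q + q ^ 2) := fun z => by
    have h : (z ^ (1 + q + q ^ 2)) ^ (q * q) = z ^ (1 + q + q ^ 2) := by
      rw [pow_mul, hfixq, hfixq]
    rw [← h]; congr 1; exact pow_two q
  rcases hr with rfl | rfl
  · exact aux9 q K h2 ξ hξ0 hξq hξns b hb hN1 hN2 hfixq (q ^ 1) (q ^ 2)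
      (by rw [← pow_add, ← pow_add]; congr 1; ring) (hfixq1 _) (hfixq2 _)
  · exact aux9 q K h2 ξ hξ0 hξq hξns b hb hN1 hN2 hfixq (q ^ 2) (q ^ 1)
      (by rw [← pow_add, ← pow_add]; congr 1; ring) (hfixq2 _) (hfixq1 _)
end

section
/- Let q be an odd prime power, ξ a nonsquare in F_q, b ∈ F_{q^3}* with N_{q^3/q}(b) ∉ {1,-1}, and assume N_{q^3/q}(b²) = -1. Then the multiplication (u,v) ⋆_{AB} (x,y) = (u·x + v·A_{b²,r}(y), u·y + ξ·v·B_{b,-r}(x)) on F_{q^3} × F_{q^3} has no zero divisors, i.e., for (x,y) ≠ (0,0), the determinant ξ·x·B_{b,-r}(x) - y·A_{b²,r}(y) ≠ 0. -/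
/-- the Dempwolff multiplication `⋆_{AB}` has no zero divisors:
for `(x,y) ≠ (0,0)`, `ξ x B_{b,-r}(x) - y A_{b²,r}(y) ≠ 0`. -/
theorem stmt12 (q : ℕ) (hq : IsPrimePow q) (hodd : Odd q)
    (K : Type*) [Field K] [Fintype K] (hcard : Fintype.card K = q ^ 3)
    (ξ : K) (hξq : ξ ^ q = ξ) (hξns : ¬ ∃ c : K, c ^ q = c ∧ c ^ 2 = ξ)
    (b : K) (hb : b ≠ 0)
    (hN1 : b ^ (1 + q + q ^ 2) ≠ 1) (hN2 : b ^ (1 + q + q ^ 2) ≠ -1)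
    (hNsq : b ^ (2 * (1 + q + q ^ 2)) = -1)
    (r : ℕ) (hr : r = 1 ∨ r = 2) :
    let H : K → K := fun x => x - b * x ^ q ^ (3 - r)
    let B : K → K := fun x => 2 * Function.invFun H x - x
    ∀ x y : K, ¬ (x = 0 ∧ y = 0) →
      ξ * x * B x - y * (y ^ q ^ r - b ^ 2 * y ^ q ^ (3 - r)) ≠ 0 := by
  have hq1 : 1 < q := hq.one_lt
  have hq0 : q ≠ 0 := by omega
  obtain ⟨p, k, hp, hk, hpk⟩ := hq
  haveI hpF : Fact (Nat.Prime p) := ⟨hp.nat_prime⟩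
  -- the characteristic of K is p
  haveI hcharK : CharP K p := by
    have hcp := ringChar.charP K
    have hprime : (ringChar K).Prime := CharP.char_is_prime K (ringChar K)
    obtain ⟨n, -, hcn⟩ := FiniteField.card K (ringChar K)
    have hdvd : p ∣ ringChar K := by
      have h1 : p ∣ Fintype.card K := by
        rw [hcard, ← hpk, ← pow_mul]
        exact dvd_pow_self p (by positivity)
      rw [hcn] at h1
      exact hp.nat_prime.dvd_of_dvd_pow h1
    have : p = ringChar K := ((Nat.prime_dvd_prime_iff_eq hp.nat_prime hprime).mp hdvd)
    rwa [this]
  -- p is odd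
  have hp2 : p ≠ 2 := by
    rintro rfl
    have : Even q := by
      rw [← hpk]
      exact (Nat.even_pow).mpr ⟨even_iff_two_dvd.mpr dvd_rfl, by omega⟩
    exact (Nat.not_odd_iff_even.mpr this) hodd
  have hneg : (-1 : K) ≠ 1 := by
    intro h
    have h2 : ((2 : ℕ) : K) = 0 := by push_cast; linear_combination -h
    have := (CharP.cast_eq_zero_iff K p 2).mp h2
    have := (Nat.prime_dvd_prime_iff_eq hp.nat_prime Nat.prime_two).mp this
    exact hp2 this
  -- Frobenius facts
  have frob3 : ∀ a : K, a ^ q ^ 3 = a := by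
    intro a
    have := FiniteField.pow_card a
    rwa [hcard] at this
  have hred : ∀ (a : K) (i j : ℕ), i = j + 3 → a ^ q ^ i = a ^ q ^ j := by
    intro a i j hij
    subst hij
    rw [pow_add, pow_mul, frob3]
  have φsub : ∀ (m : ℕ) (u v : K), (u - v) ^ q ^ m = u ^ q ^ m - v ^ q ^ m := by
    intro m u v
    rw [← hpk, ← pow_mul]
    exact sub_pow_char_pow u v (k * m)
  have fixpow : ∀ u : K, u ^ q = u → ∀ m, u ^ q ^ m = u := by
    intro u hu m
    induction m with
    | zero => simp
    | succ n ih => rw [pow_succ, pow_mul, ih, hu]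
  have hrle : 3 - r + r = 3 := by rcases hr with h | h <;> subst h <;> rfl
  have hrle' : r + (3 - r) = 3 := by rcases hr with h | h <;> subst h <;> rfl
  have factA : ∀ a : K, (a ^ q ^ (3 - r)) ^ q ^ (3 - r) = a ^ q ^ r := by
    intro a
    rw [← pow_mul, ← pow_add]
    rcases hr with h | h <;> subst h
    · exact hred a (3 - 1 + (3 - 1)) 1 (by norm_num)
    · norm_num
  have factB : ∀ a : K, (a ^ q ^ (3 - r)) ^ q ^ r = a := by
    intro a
    rw [← pow_mul, ← pow_add, hrle]
    exact frob3 a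
  have factB' : ∀ a : K, (a ^ q ^ r) ^ q ^ (3 - r) = a := by
    intro a
    rw [← pow_mul, ← pow_add, hrle']
    exact frob3 a
  have hsum : ∀ c : K, c ^ q ^ (3 - r) * c ^ q ^ r = c ^ q * c ^ q ^ 2 := by
    intro c
    rcases hr with h | h <;> subst h <;> norm_num <;> ring
  have iter : ∀ a c : K, a = c * a ^ q ^ (3 - r) → a = c ^ (1 + q + q ^ 2) * a := by
    intro a c ha
    have h1 : a ^ q ^ (3 - r) = c ^ q ^ (3 - r) * a ^ q ^ r := by
      conv_lhs => rw [ha]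
      rw [mul_pow, factA]
    have h2 : a ^ q ^ r = c ^ q ^ r * a := by
      conv_lhs => rw [ha]
      rw [mul_pow, factB]
    calc a = c * a ^ q ^ (3 - r) := ha
      _ = c * (c ^ q ^ (3 - r) * (c ^ q ^ r * a)) := by rw [h1, h2]
      _ = c * (c ^ q ^ (3 - r) * c ^ q ^ r) * a := by ring
      _ = c ^ (1 + q + q ^ 2) * a := by
          rw [hsum c, pow_add, pow_add, pow_one]; ring
  have hker : ∀ (c a : K), c ^ (1 + q + q ^ 2) ≠ 1 →
      a - c * a ^ q ^ (3 - r) = 0 → a = 0 := by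
    intro c a hcN ha0
    have ha : a = c * a ^ q ^ (3 - r) := by linear_combination ha0
    have h2 := iter a c ha
    have h3 : (c ^ (1 + q + q ^ 2) - 1) * a = 0 := by linear_combination -h2
    rcases mul_eq_zero.mp h3 with h | h
    · exact absurd (by linear_combination h) hcN
    · exact h
  have hinjH : Function.Injective (fun x : K => x - b * x ^ q ^ (3 - r)) := by
    intro u v huv
    have huv' : u - b * u ^ q ^ (3 - r) = v - b * v ^ q ^ (3 - r) := huv
    have h0 : (u - v) - b * (u - v) ^ q ^ (3 - r) = 0 := by
      rw [φsub]; linear_combination huv'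
    have := hker b (u - v) hN1 h0
    exact sub_eq_zero.mp this
  have hsurj : Function.Surjective (fun x : K => x - b * x ^ q ^ (3 - r)) :=
    (Finite.injective_iff_bijective.mp hinjH).surjective
  have hGN : (b ^ 2) ^ (1 + q + q ^ 2) ≠ 1 := by
    rw [← pow_mul, hNsq]
    exact hneg
  intro H B x y hxy hc
  have hc' : ξ * x * (2 * Function.invFun (fun x : K => x - b * x ^ q ^ (3 - r)) x - x)
      - y * (y ^ q ^ r - b ^ 2 * y ^ q ^ (3 - r)) = 0 := hc
  set w := Function.invFun (fun x : K => x - b * x ^ q ^ (3 - r)) x with hwdef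
  have hHw : w - b * w ^ q ^ (3 - r) = x := Function.invFun_eq (hsurj x)
  have hxiw : (ξ * w ^ 2) ^ q ^ (3 - r) = ξ * (w ^ q ^ (3 - r)) ^ 2 := by
    rw [mul_pow, fixpow ξ hξq (3 - r), pow_right_comm]
  have key1 : ξ * x * (2 * w - x) = ξ * w ^ 2 - b ^ 2 * (ξ * w ^ 2) ^ q ^ (3 - r) := by
    rw [hxiw, ← hHw]; ring
  have hzpow : (y * y ^ q ^ r) ^ q ^ (3 - r) = y ^ q ^ (3 - r) * y := by
    rw [mul_pow, factB']
  have key2 : y * (y ^ q ^ r - b ^ 2 * y ^ q ^ (3 - r))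
      = y * y ^ q ^ r - b ^ 2 * (y * y ^ q ^ r) ^ q ^ (3 - r) := by
    rw [hzpow]; ring
  have heq : ξ * w ^ 2 - b ^ 2 * (ξ * w ^ 2) ^ q ^ (3 - r)
      = y * y ^ q ^ r - b ^ 2 * (y * y ^ q ^ r) ^ q ^ (3 - r) := by
    linear_combination hc' - key1 + key2
  have ha0 : (ξ * w ^ 2 - y * y ^ q ^ r)
      - b ^ 2 * (ξ * w ^ 2 - y * y ^ q ^ r) ^ q ^ (3 - r) = 0 := by
    rw [φsub]; linear_combination heq
  have hkey : ξ * w ^ 2 = y * y ^ q ^ r := by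
    have := hker (b ^ 2) _ hGN ha0
    linear_combination this
  by_cases hw0 : w = 0
  · have hx0 : x = 0 := by
      rw [← hHw, hw0, zero_pow (pow_ne_zero _ hq0)]
      ring
    have hy0 : y * y ^ q ^ r = 0 := by rw [← hkey, hw0]; ring
    have hy : y = 0 := by
      rcases mul_eq_zero.mp hy0 with h | h
      · exact h
      · exact (pow_eq_zero_iff (pow_ne_zero r hq0)).mp h
    exact hxy ⟨hx0, hy⟩
  · have hξ0 : ξ ≠ 0 := by
      rintro rfl
      exact hξns ⟨0, by rw [zero_pow hq0], by rw [zero_pow two_ne_zero]⟩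
    -- norm computations
    have hNfix : ∀ a : K, (a ^ (1 + q + q ^ 2)) ^ q = a ^ (1 + q + q ^ 2) := by
      intro a
      have e1 : (a ^ (1 + q + q ^ 2)) ^ q = a ^ q * a ^ q ^ 2 * a ^ q ^ 3 := by
        rw [← pow_mul, ← pow_add, ← pow_add]
        congr 1
        ring
      have e2 : a ^ (1 + q + q ^ 2) = a * a ^ q * a ^ q ^ 2 := by
        rw [pow_add, pow_add, pow_one]
      rw [e1, e2, frob3 a]
      ring
    have hNfixm : ∀ (a : K) (m : ℕ), (a ^ (1 + q + q ^ 2)) ^ q ^ m = a ^ (1 + q + q ^ 2) :=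
      fun a => fixpow _ (hNfix a)
    have hξN : ξ ^ (1 + q + q ^ 2) = ξ ^ 3 := by
      rw [pow_add, pow_add, pow_one, hξq, fixpow ξ hξq 2]
      ring
    have hnorm : (ξ * w ^ 2) ^ (1 + q + q ^ 2) = (y * y ^ q ^ r) ^ (1 + q + q ^ 2) := by
      rw [hkey]
    have hfinal : ξ ^ 3 * (w ^ (1 + q + q ^ 2)) ^ 2 = (y ^ (1 + q + q ^ 2)) ^ 2 := by
      calc ξ ^ 3 * (w ^ (1 + q + q ^ 2)) ^ 2
          = (ξ * w ^ 2) ^ (1 + q + q ^ 2) := by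
            rw [mul_pow, hξN, pow_right_comm]
        _ = (y * y ^ q ^ r) ^ (1 + q + q ^ 2) := hnorm
        _ = (y ^ (1 + q + q ^ 2)) ^ 2 := by
            rw [mul_pow, pow_right_comm, hNfixm y r]
            ring
    set nw := w ^ (1 + q + q ^ 2) with hnwdef
    set ny := y ^ (1 + q + q ^ 2) with hnydef
    have hnw0 : nw ≠ 0 := pow_ne_zero _ hw0
    refine hξns ⟨ny / (nw * ξ), ?_, ?_⟩
    · rw [div_pow, mul_pow, hNfix y, hNfix w, hξq]
    · rw [div_pow, mul_pow]
      rw [div_eq_iff (mul_ne_zero (pow_ne_zero 2 hnw0) (pow_ne_zero 2 hξ0))]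
      linear_combination -hfinal
end

section
/- Let q be a prime power and consider F_{q^6} with σ ∈ {q^2, q^4}. Suppose λ, α ∈ F_{q^6}, α ≠ 0, satisfy N_{q^6/q^3}(y) ≠ N_{q^6/q^3}(λ·y + α·y^σ) for all y ∈ F_{q^6}*. Then the multiplication x ⋆ y = (λ·y + α·y^σ)·x + y·x^{q^3} on F_{q^6} has no zero divisors: x ⋆ y = 0 with y ≠ 0 implies x = 0. -/
/-- the multiplication `x ⋆ y = (λy + αy^σ)x + y x^{q^3}` on
`F_{q^6}` has no zero divisors, under the norm condition. -/
theorem stmt14 (q : ℕ) (hq : IsPrimePow q)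
    (L : Type*) [Field L] [Fintype L] (hL : Fintype.card L = q ^ 6)
    (σ : ℕ) (hσ : σ = q ^ 2 ∨ σ = q ^ 4)
    (lam α : L) (hα : α ≠ 0)
    (hnorm : ∀ y : L, y ≠ 0 →
      y ^ (q ^ 3 + 1) ≠ (lam * y + α * y ^ σ) ^ (q ^ 3 + 1)) :
    ∀ x y : L, y ≠ 0 →
      (lam * y + α * y ^ σ) * x + y * x ^ q ^ 3 = 0 → x = 0 := by
  intro x y hy heq
  by_contra hx
  have hq2 : 2 ≤ q := hq.two_le
  set c : L := lam * y + α * y ^ σ with hc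
  -- x^(card - 1) = 1
  have hx1 : x ^ (q ^ 6 - 1) = 1 := by
    have := FiniteField.pow_card_sub_one_eq_one x hx
    rwa [hL] at this
  -- (-1)^(q^3+1) = 1
  have hneg : ((-1 : L)) ^ (q ^ 3 + 1) = 1 := by
    rcases Nat.even_or_odd q with he | ho
    · have h2 : ringChar L = 2 := by
        have hprime : (ringChar L).Prime := CharP.char_is_prime L (ringChar L)
        have hdvd : ringChar L ∣ Fintype.card L :=
          (CharP.cast_eq_zero_iff L (ringChar L) _).mp (Nat.cast_card_eq_zero L)
        rw [hL] at hdvd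
        obtain ⟨p, k, hp, hk, rfl⟩ := hq
        have hp' : p.Prime := Nat.prime_iff.mpr hp
        have hr : ringChar L ∣ p := by
          have hpk : (p ^ k) ^ 6 = p ^ (k * 6) := by rw [pow_mul]
          rw [hpk] at hdvd
          exact hprime.dvd_of_dvd_pow hdvd
        have hpe : p = 2 := by
          have h2d : (2 : ℕ) ∣ p ^ k := he.two_dvd
          have : (2 : ℕ) ∣ p := Nat.Prime.dvd_of_dvd_pow Nat.prime_two h2d
          exact ((Nat.prime_dvd_prime_iff_eq Nat.prime_two hp').mp this).symm
        rw [(Nat.prime_dvd_prime_iff_eq hprime hp').mp hr, hpe]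
      rw [neg_one_eq_one_iff.mpr h2, one_pow]
    · have : Even (q ^ 3 + 1) := by
        have : Odd (q ^ 3) := ho.pow
        exact this.add_one
      exact this.neg_one_pow
  -- c = -(y * x^(q^3-1))
  have hxq : x ^ q ^ 3 = x ^ (q ^ 3 - 1) * x := by
    rw [← pow_succ]
    congr 1
    have : 1 ≤ q ^ 3 := Nat.one_le_pow _ _ (by omega)
    omega
  have hcx : c * x = -(y * x ^ (q ^ 3 - 1)) * x := by
    have : c * x = -(y * x ^ q ^ 3) := by linear_combination heq
    rw [this, hxq]; ring
  have hceq : c = -(y * x ^ (q ^ 3 - 1)) := mul_right_cancel₀ hx hcx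
  have key : c ^ (q ^ 3 + 1) = y ^ (q ^ 3 + 1) := by
    rw [hceq, neg_eq_neg_one_mul, mul_pow, mul_pow, hneg, one_mul, ← pow_mul]
    have : (q ^ 3 - 1) * (q ^ 3 + 1) = q ^ 6 - 1 := by
      obtain ⟨k, hk⟩ : ∃ k, q ^ 3 = k + 1 :=
        ⟨q ^ 3 - 1, by have : 1 ≤ q ^ 3 := Nat.one_le_pow _ _ (by omega); omega⟩
      have h6 : q ^ 6 = (k + 1) * (k + 1) := by rw [← hk]; ring
      rw [hk, h6, Nat.add_sub_cancel]
      exact (Nat.sub_eq_of_eq_add (by ring)).symm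
    rw [this, hx1, mul_one]
  exact hnorm y hy key.symm
end

section
/- Let q be an odd prime power and suppose A, B, C, D ∈ F_{q^6} satisfy: A·(C - λD) = 0, B·(D^{q^3} - λ·C^{q^3}) = 0, A·(D·μ + C^{q^3}) = 0, B·(C^{q^3}·μ^{q^3} + D) = 0, with C^{q^3+1} ≠ D^{q^3+1}, (A,B) ≠ (0,0), (C,D) ≠ (0,0), and λ, μ ∈ F_{q^6}*. Then A = 0 or B = 0, and in either case N_{q^6/q^3}(μ) = N_{q^6/q^3}(λ). -/
/-- the key computation of Lemma 2.2: under the four product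
equations and `C^{q^3+1} ≠ D^{q^3+1}`, one has `A = 0` or `B = 0`, and in
either case `N_{q^6/q^3}(μ) = N_{q^6/q^3}(λ)`. -/
theorem stmt17 (q : ℕ) (hq : IsPrimePow q) (hodd : Odd q)
    (L : Type*) [Field L] [Fintype L] (hL : Fintype.card L = q ^ 6)
    (A B C D lam mu : L) (hlam : lam ≠ 0) (hmu : mu ≠ 0)
    (h1 : A * (C - lam * D) = 0)
    (h2 : B * (D ^ q ^ 3 - lam * C ^ q ^ 3) = 0)
    (h3 : A * (D * mu + C ^ q ^ 3) = 0)
    (h4 : B * (C ^ q ^ 3 * mu ^ q ^ 3 + D) = 0)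
    (hCD : C ^ (q ^ 3 + 1) ≠ D ^ (q ^ 3 + 1))
    (hAB : ¬ (A = 0 ∧ B = 0)) (hCD0 : ¬ (C = 0 ∧ D = 0)) :
    (A = 0 ∨ B = 0) ∧ mu ^ (q ^ 3 + 1) = lam ^ (q ^ 3 + 1) := by
  have hq0 : q ≠ 0 := hq.pos.ne'
  set k := q ^ 3 with hk
  have hk0 : k ≠ 0 := pow_ne_zero _ hq0
  have hoddk : Odd k := hodd.pow
  have hkk : ∀ x : L, (x ^ k) ^ k = x := by
    intro x
    rw [← pow_mul]
    have h6 : k * k = Fintype.card L := by rw [hL, hk]; ring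
    rw [h6, FiniteField.pow_card]
  by_cases hA : A = 0
  · have hB : B ≠ 0 := fun hB => hAB ⟨hA, hB⟩
    have e2' : D ^ k = lam * C ^ k := by
      rcases mul_eq_zero.mp h2 with h | h
      · exact absurd h hB
      · exact sub_eq_zero.mp h
    have e4' : C ^ k * mu ^ k = -D := by
      rcases mul_eq_zero.mp h4 with h | h
      · exact absurd h hB
      · exact eq_neg_of_add_eq_zero_left h
    have hC : C ≠ 0 := by
      intro hC
      have hDk : D ^ k = 0 := by rw [e2', hC, zero_pow hk0, mul_zero]
      exact hCD0 ⟨hC, (pow_eq_zero_iff hk0).mp hDk⟩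
    have e4k : C * mu = -(D ^ k) := by
      have h := congrArg (· ^ k) e4'
      simp only [mul_pow, hkk] at h
      rwa [hoddk.neg_pow] at h
    have e2k : lam ^ k * C = D := by
      have h := congrArg (· ^ k) e2'
      simp only [mul_pow, hkk] at h
      exact h.symm
    have key : mu ^ (k + 1) * C ^ (k + 1) = lam ^ (k + 1) * C ^ (k + 1) := by
      have p1 : mu ^ (k + 1) * C ^ (k + 1) = (C ^ k * mu ^ k) * (C * mu) := by ring
      have p2 : lam ^ (k + 1) * C ^ (k + 1) = (lam * C ^ k) * (lam ^ k * C) := by ring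
      rw [p1, p2, e4', e4k, ← e2', e2k]
      ring
    exact ⟨Or.inl hA, mul_right_cancel₀ (pow_ne_zero _ hC) key⟩
  · by_cases hB : B = 0
    · have e1' : C = lam * D := by
        rcases mul_eq_zero.mp h1 with h | h
        · exact absurd h hA
        · exact sub_eq_zero.mp h
      have e3' : D * mu = -C ^ k := by
        rcases mul_eq_zero.mp h3 with h | h
        · exact absurd h hA
        · exact eq_neg_of_add_eq_zero_left h
      have hD : D ≠ 0 := by
        intro hD
        exact hCD0 ⟨by rw [e1', hD, mul_zero], hD⟩
      have e3k : D ^ k * mu ^ k = -C := by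
        have h := congrArg (· ^ k) e3'
        simp only [mul_pow, hkk] at h
        rwa [hoddk.neg_pow, hkk] at h
      have e1k : C ^ k = lam ^ k * D ^ k := by
        have h := congrArg (· ^ k) e1'
        simpa only [mul_pow] using h
      have key : mu ^ (k + 1) * D ^ (k + 1) = lam ^ (k + 1) * D ^ (k + 1) := by
        have p1 : mu ^ (k + 1) * D ^ (k + 1) = (D * mu) * (D ^ k * mu ^ k) := by ring
        have p2 : lam ^ (k + 1) * D ^ (k + 1) = (lam * D) * (lam ^ k * D ^ k) := by ring
        rw [p1, p2, e3', e3k, ← e1', ← e1k]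
        ring
      exact ⟨Or.inr hB, mul_right_cancel₀ (pow_ne_zero _ hD) key⟩
    · exfalso
      have e1' : C = lam * D := by
        rcases mul_eq_zero.mp h1 with h | h
        · exact absurd h hA
        · exact sub_eq_zero.mp h
      have e2' : D ^ k = lam * C ^ k := by
        rcases mul_eq_zero.mp h2 with h | h
        · exact absurd h hB
        · exact sub_eq_zero.mp h
      apply hCD
      calc C ^ (k + 1) = C ^ k * C := by ring
        _ = C ^ k * (lam * D) := by rw [← e1']
        _ = (lam * C ^ k) * D := by ring
        _ = D ^ k * D := by rw [← e2']
        _ = D ^ (k + 1) := by ring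
end

section
/- Let q be an odd prime power, ξ a nonsquare in F_q, a ∈ F_{q^3}* with N_{q^3/q}(a) ∉ {-1, 1}, and r ∈ {1,2}. Let ⊥ be the polarity of PG(3,q^3) induced by the quadric X_0X_3 - X_1X_2 = 0 (bilinear form x_0y_3 + x_3y_0 - x_1y_2 - x_2y_1). With t_1 : {X_2 = -a^{q^r+1}X_1, X_3 = -ξ a^{q^r+1}X_0} and t_2 : {X_1 = a^{q^{3-r}}X_2, X_0 = (a^{q^{3-r}}/ξ)X_3}, one has t_1^⊥ ∩ t_2 = ∅. -/
/-- with respect to the polarity of the quadric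
`X_0X_3 - X_1X_2 = 0`, the polar line of `t_1` is disjoint from `t_2`. -/
theorem stmt18 (q : ℕ) (hq : IsPrimePow q) (hodd : Odd q)
    (K : Type*) [Field K] [Fintype K] (hcard : Fintype.card K = q ^ 3)
    (ξ : K) (hξq : ξ ^ q = ξ) (hξns : ¬ ∃ c : K, c ^ q = c ∧ c ^ 2 = ξ)
    (a : K) (ha : a ≠ 0)
    (hN1 : a ^ (1 + q + q ^ 2) ≠ 1) (hN2 : a ^ (1 + q + q ^ 2) ≠ -1)
    (r : ℕ) (hr : r = 1 ∨ r = 2) :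
    ∀ x0 x1 x2 x3 : K, ¬ (x0 = 0 ∧ x1 = 0 ∧ x2 = 0 ∧ x3 = 0) →
      -- (x0,x1,x2,x3) lies on t_1^⊥
      (∀ y0 y1 y2 y3 : K,
        (y2 = -a ^ (q ^ r + 1) * y1 ∧ y3 = -ξ * a ^ (q ^ r + 1) * y0) →
        x0 * y3 + x3 * y0 - x1 * y2 - x2 * y1 = 0) →
      -- then it does not lie on t_2
      ¬ (x1 = a ^ q ^ (3 - r) * x2 ∧ x0 = a ^ q ^ (3 - r) / ξ * x3) := by
  intro x0 x1 x2 x3 hne hperp h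
  obtain ⟨h1, h2⟩ := h
  have hq0 : q ≠ 0 := hq.pos.ne'
  have hξ0 : ξ ≠ 0 := by
    intro h0
    exact hξns ⟨0, by simp [zero_pow hq0], by simp [h0]⟩
  have e1 := hperp 1 0 0 (-(ξ * a ^ (q ^ r + 1))) ⟨by ring, by ring⟩
  have e2 := hperp 0 1 (-(a ^ (q ^ r + 1))) 0 ⟨by ring, by ring⟩
  have hx3 : x3 = ξ * a ^ (q ^ r + 1) * x0 := by linear_combination e1
  have hx2 : x2 = a ^ (q ^ r + 1) * x1 := by linear_combination -e2
  have hAB : a ^ (q ^ r + 1) * a ^ q ^ (3 - r) = a ^ (1 + q + q ^ 2) := by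
    rw [← pow_add]
    rcases hr with h | h <;> subst h <;> (congr 1; ring)
  have hN : (1 : K) - a ^ (1 + q + q ^ 2) ≠ 0 := by
    intro h0
    exact hN1 (sub_eq_zero.mp h0).symm
  have hx2z : x2 = 0 := by
    have : x2 * (1 - a ^ (1 + q + q ^ 2)) = 0 := by
      rw [← hAB]; linear_combination hx2 + a ^ (q ^ r + 1) * h1
    exact (mul_eq_zero.mp this).resolve_right hN
  have hx3z : x3 = 0 := by
    have : x3 * (1 - a ^ (1 + q + q ^ 2)) = 0 := by
      rw [← hAB]
      field_simp at h2
      linear_combination hx3 + a ^ (q ^ r + 1) * h2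
    exact (mul_eq_zero.mp this).resolve_right hN
  have hx1z : x1 = 0 := by rw [h1, hx2z, mul_zero]
  have hx0z : x0 = 0 := by rw [h2, hx3z, mul_zero]
  exact hne ⟨hx0z, hx1z, hx2z, hx3z⟩
end
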